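/- For any bipartite quantum state ρ on systems E and A₁A₂, the max-mutual information satisfies the non-locking inequality I_max(E;A₁A₂)_ρ ≤ I_max(E;A₁)_ρ + 2·log|A₂|, where |A₂| is the dimension of system A₂. -/

import Mathlib

open Matrix Kronecker ComplexOrder

noncomputable section

variable {n : Type*} [Fintype n] [DecidableEq n]

/-- The PSD square root of a PSD matrix, as `Matrix.PosSemidef.sqrt` was defined in Mathlib
(December 2024); it has since been removed from Mathlib. -/
def Matrix.PosSemidef.sqrt {𝕜 : Type*} [RCLike 𝕜] {A : Matrix n n 𝕜} (hA : A.PosSemidef) :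
    Matrix n n 𝕜 :=
  hA.1.eigenvectorUnitary.1 * diagonal ((↑) ∘ (√·) ∘ hA.1.eigenvalues) *
  (star hA.1.eigenvectorUnitary : Matrix n n 𝕜)

open Classical in
/-- The square root of a matrix: the PSD square root if the matrix is PSD, else 0. -/
def msqrt (A : Matrix n n ℂ) : Matrix n n ℂ :=
  if h : A.PosSemidef then h.sqrt else 0

/-- The trace norm (Schatten 1-norm) of a matrix. -/
def trNorm (A : Matrix n n ℂ) : ℝ :=
  ((Matrix.posSemidef_conjTranspose_mul_self A).sqrt.trace).re

/-- The operator norm of a matrix, acting on the Euclidean space. -/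
def opNorm (A : Matrix n n ℂ) : ℝ :=
  ‖(Matrix.toEuclideanCLM (𝕜 := ℂ) A : EuclideanSpace ℂ n →L[ℂ] EuclideanSpace ℂ n)‖

/-- A (normalized) quantum state: positive semidefinite with unit trace. -/
def IsState (ρ : Matrix n n ℂ) : Prop := ρ.PosSemidef ∧ ρ.trace = 1

/-- A subnormalized quantum state: positive semidefinite with trace at most one. -/
def IsSubState (ρ : Matrix n n ℂ) : Prop := ρ.PosSemidef ∧ (ρ.trace).re ≤ 1

/-- Loewner (semidefinite) order: `A ≤ B` iff `B - A` is positive semidefinite. -/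
def LoewnerLE (A B : Matrix n n ℂ) : Prop := (B - A).PosSemidef

/-- Fidelity `F(ρ,σ) = ‖√ρ√σ‖₁` (extended to positive operators). -/
def fid (ρ σ : Matrix n n ℂ) : ℝ := trNorm (msqrt ρ * msqrt σ)

/-- Generalized fidelity for subnormalized states. -/
def gFid (ρ σ : Matrix n n ℂ) : ℝ :=
  fid ρ σ + Real.sqrt ((1 - ρ.trace.re) * (1 - σ.trace.re))

/-- (Generalized) purified distance `P(ρ,σ) = sqrt(1 - F(ρ,σ)²)`. -/
def pDist (ρ σ : Matrix n n ℂ) : ℝ := Real.sqrt (1 - (gFid ρ σ)^2)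

/-- Generalized trace distance `δ(ρ,σ) = (‖ρ-σ‖₁ + |Tr(ρ-σ)|)/2` for subnormalized states. -/
def trDist (ρ σ : Matrix n n ℂ) : ℝ :=
  (trNorm (ρ - σ) + |(ρ.trace - σ.trace).re|) / 2

variable {α β γ : Type*} [Fintype α] [DecidableEq α] [Fintype β] [DecidableEq β]
  [Fintype γ] [DecidableEq γ]

/-- Partial trace over the second tensor factor. -/
def ptrSnd (ρ : Matrix (α × β) (α × β) ℂ) : Matrix α α ℂ :=
  fun i j => ∑ k, ρ (i, k) (j, k)

/-- Partial trace over the first tensor factor. -/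
def ptrFst (ρ : Matrix (α × β) (α × β) ℂ) : Matrix β β ℂ :=
  fun i j => ∑ k, ρ (k, i) (k, j)

/-- Partial trace over the middle factor of a tripartite system `(α × β) × γ`. -/
def ptrMid (ρ : Matrix ((α × β) × γ) ((α × β) × γ) ℂ) : Matrix (α × γ) (α × γ) ℂ :=
  fun p q => ∑ m, ρ ((p.1, m), p.2) ((q.1, m), q.2)

/-- Max-relative entropy `D_max(ρ‖σ) = inf {λ : ρ ≤ 2^λ σ}`. -/
def Dmax (ρ σ : Matrix n n ℂ) : ℝ :=
  sInf {l : ℝ | LoewnerLE ρ (((2:ℝ) ^ l) • σ)}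

open Classical in
/-- von Neumann entropy (base 2) of a matrix (0 if not Hermitian). -/
def vnEntropy (ρ : Matrix n n ℂ) : ℝ :=
  if h : ρ.IsHermitian then -∑ i, (h.eigenvalues i) * Real.logb 2 (h.eigenvalues i) else 0

/-- Max-mutual information `I_max(E;A)_ρ` for a state `ρ_{AE}` on `A × E` (A first):
the infimum of λ such that `ρ_{AE} ≤ 2^λ·σ_A ⊗ ρ_E` for some state σ_A. -/
def ImaxEA {α β : Type*} [Fintype α] [DecidableEq α] [Fintype β] [DecidableEq β]
    (ρ : Matrix (α × β) (α × β) ℂ) : ℝ :=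
  sInf {l : ℝ | ∃ σ : Matrix α α ℂ, IsState σ ∧
    LoewnerLE ρ (((2:ℝ) ^ l) • (σ ⊗ₖ ptrFst ρ))}

section Aux
set_option linter.unusedSectionVars false
variable {n : Type*} [Fintype n] [DecidableEq n]

lemma psd_sum {ι : Type*} (s : Finset ι) (f : ι → Matrix n n ℂ)
    (h : ∀ i ∈ s, (f i).PosSemidef) : (∑ i ∈ s, f i).PosSemidef := by
  classical
  induction s using Finset.induction_on with
  | empty => simpa using Matrix.PosSemidef.zero
  | insert _ _ hx ih =>
    rw [Finset.sum_insert hx]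
    exact (h _ (Finset.mem_insert_self _ _)).add
      (ih fun i hi => h i (Finset.mem_insert_of_mem hi))

lemma psd_smul_real {c : ℝ} (hc : 0 ≤ c) {A : Matrix n n ℂ} (hA : A.PosSemidef) :
    (c • A).PosSemidef := by
  refine ⟨?_, fun x => ?_⟩
  · unfold Matrix.IsHermitian
    rw [Matrix.conjTranspose_smul, hA.1]
    norm_num
  · exact (hA.smul hc).2 x

lemma psd_trace_nonneg {A : Matrix n n ℂ} (hA : A.PosSemidef) : 0 ≤ A.trace := by
  exact hA.trace_nonneg

lemma kronecker_psd {m : Type*} [Fintype m] [DecidableEq m]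
    {A : Matrix n n ℂ} {B : Matrix m m ℂ} (hA : A.PosSemidef) (hB : B.PosSemidef) :
    (A ⊗ₖ B).PosSemidef := by
  exact hA.kronecker hB
end Aux
section Aux2
set_option linter.unusedSectionVars false
set_option maxHeartbeats 1000000

variable {α₁ α₂ β : Type*} [Fintype α₁] [DecidableEq α₁] [Fintype α₂] [DecidableEq α₂]
  [Fintype β] [DecidableEq β]

/-- Inclusion of the `m`-th middle slice. -/
def inclG (α₁ β : Type*) {α₂ : Type*} [DecidableEq α₁] [DecidableEq α₂] [DecidableEq β]
    (m : α₂) : Matrix ((α₁ × α₂) × β) (α₁ × β) ℂ :=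
  fun p q => if p.1.2 = m ∧ q = (p.1.1, p.2) then 1 else 0

/-- Tensoring a matrix on `α₁ × β` with the identity in the middle slot. -/
def embedMid (M : Matrix (α₁ × β) (α₁ × β) ℂ) :
    Matrix ((α₁ × α₂) × β) ((α₁ × α₂) × β) ℂ :=
  fun p q => if p.1.2 = q.1.2 then M (p.1.1, p.2) (q.1.1, q.2) else 0

variable {X : Type*} [Fintype X]

lemma inclG_mul_apply (m : α₂) (M : Matrix (α₁ × β) X ℂ) (p : (α₁ × α₂) × β) (x : X) :
    (inclG α₁ β m * M) p x = if p.1.2 = m then M (p.1.1, p.2) x else 0 := by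
  rw [Matrix.mul_apply]
  by_cases h : p.1.2 = m <;>
    simp [inclG, h, ite_and, Finset.sum_ite_eq']

lemma mul_conjTranspose_inclG_apply (m : α₂) (M : Matrix X (α₁ × β) ℂ) (x : X)
    (p : (α₁ × α₂) × β) :
    (M * (inclG α₁ β m)ᴴ) x p = if p.1.2 = m then M x (p.1.1, p.2) else 0 := by
  rw [Matrix.mul_apply]
  by_cases h : p.1.2 = m <;>
    simp [inclG, Matrix.conjTranspose_apply, h, ite_and, Finset.sum_ite_eq',
      apply_ite (star : ℂ → ℂ)]

lemma conjTranspose_inclG_mul_apply (m : α₂) (M : Matrix ((α₁ × α₂) × β) X ℂ)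
    (q : α₁ × β) (x : X) :
    ((inclG α₁ β m)ᴴ * M) q x = M ((q.1, m), q.2) x := by
  rw [Matrix.mul_apply]
  have hcond : ∀ p : (α₁ × α₂) × β, (p.1.2 = m ∧ q = (p.1.1, p.2)) ↔ p = ((q.1, m), q.2) := by
    rintro ⟨⟨a, j⟩, e⟩
    simp only [Prod.ext_iff]
    aesop
  simp [inclG, Matrix.conjTranspose_apply, hcond, apply_ite (star : ℂ → ℂ),
    Finset.sum_ite_eq']

lemma mul_inclG_apply (m : α₂) (M : Matrix X ((α₁ × α₂) × β) ℂ) (x : X) (q : α₁ × β) :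
    (M * inclG α₁ β m) x q = M x ((q.1, m), q.2) := by
  rw [Matrix.mul_apply]
  have hcond : ∀ p : (α₁ × α₂) × β, (p.1.2 = m ∧ q = (p.1.1, p.2)) ↔ p = ((q.1, m), q.2) := by
    rintro ⟨⟨a, j⟩, e⟩
    simp only [Prod.ext_iff]
    aesop
  simp [inclG, hcond, Finset.sum_ite_eq']

lemma ptrMid_eq_sum (ρ : Matrix ((α₁ × α₂) × β) ((α₁ × α₂) × β) ℂ) :
    ptrMid ρ = ∑ m : α₂, (inclG α₁ β m)ᴴ * ρ * inclG α₁ β m := by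
  ext q r
  simp [ptrMid, Matrix.sum_apply, mul_inclG_apply, conjTranspose_inclG_mul_apply]

lemma embedMid_eq_sum (M : Matrix (α₁ × β) (α₁ × β) ℂ) :
    (embedMid M : Matrix ((α₁ × α₂) × β) ((α₁ × α₂) × β) ℂ)
      = ∑ m : α₂, inclG α₁ β m * M * (inclG α₁ β m)ᴴ := by
  ext p q
  simp only [Matrix.sum_apply, mul_conjTranspose_inclG_apply, inclG_mul_apply]
  by_cases h : p.1.2 = q.1.2
  · rw [Finset.sum_eq_single q.1.2]
    · simp [embedMid, h]
    · intro b _ hb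
      rw [if_neg fun hc => hb hc.symm]
    · simp
  · rw [Finset.sum_eq_zero, embedMid, if_neg h]
    intro m _
    by_cases h2 : q.1.2 = m
    · rw [if_pos h2, if_neg (h2 ▸ h)]
    · rw [if_neg h2]

lemma sum_inclG_mul_conjTranspose :
    ∑ m : α₂, inclG α₁ β m * (inclG α₁ β m)ᴴ
      = (1 : Matrix ((α₁ × α₂) × β) ((α₁ × α₂) × β) ℂ) := by
  ext p q
  simp only [Matrix.sum_apply, mul_conjTranspose_inclG_apply]
  by_cases h : p.1.2 = q.1.2
  · rw [Finset.sum_eq_single q.1.2]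
    · simp only [if_pos rfl, inclG, Matrix.one_apply, Prod.ext_iff]
      aesop
    · intro b _ hb
      rw [if_neg fun hc => hb hc.symm]
    · simp
  · rw [Finset.sum_eq_zero, Matrix.one_apply,
      if_neg (fun hc : p = q => h (by rw [hc]))]
    intro m _
    by_cases h2 : q.1.2 = m
    · rw [if_pos h2, inclG, if_neg]
      simp only [Prod.ext_iff, not_and]
      intro h3 h4
      exact absurd (h3.trans h2.symm) h
    · rw [if_neg h2]

end Aux2
section Aux3
set_option linter.unusedSectionVars false
set_option maxHeartbeats 1000000

variable {α₁ α₂ β : Type*} [Fintype α₁] [DecidableEq α₁] [Fintype α₂] [DecidableEq α₂]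
  [Fintype β] [DecidableEq β]

lemma ptrMid_posSemidef {ρ : Matrix ((α₁ × α₂) × β) ((α₁ × α₂) × β) ℂ}
    (hρ : ρ.PosSemidef) : (ptrMid ρ).PosSemidef := by
  rw [ptrMid_eq_sum]
  exact psd_sum _ _ fun m _ => hρ.conjTranspose_mul_mul_same _

lemma embedMid_posSemidef {M : Matrix (α₁ × β) (α₁ × β) ℂ} (hM : M.PosSemidef) :
    (embedMid M : Matrix ((α₁ × α₂) × β) ((α₁ × α₂) × β) ℂ).PosSemidef := by
  rw [embedMid_eq_sum]
  exact psd_sum _ _ fun m _ => hM.mul_mul_conjTranspose_same _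

lemma ptrMid_sub (X Y : Matrix ((α₁ × α₂) × β) ((α₁ × α₂) × β) ℂ) :
    ptrMid (X - Y) = ptrMid X - ptrMid Y := by
  ext p q
  simp [ptrMid, Matrix.sub_apply, Finset.sum_sub_distrib]

lemma ptrMid_smul (c : ℝ) (X : Matrix ((α₁ × α₂) × β) ((α₁ × α₂) × β) ℂ) :
    ptrMid (c • X) = c • ptrMid X := by
  ext p q
  simp [ptrMid, Matrix.smul_apply, Finset.smul_sum]

lemma embedMid_sub (X Y : Matrix (α₁ × β) (α₁ × β) ℂ) :
    (embedMid (X - Y) : Matrix ((α₁ × α₂) × β) ((α₁ × α₂) × β) ℂ)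
      = embedMid X - embedMid Y := by
  ext p q
  simp only [embedMid, Matrix.sub_apply]
  split_ifs <;> simp

lemma embedMid_smul (c : ℝ) (X : Matrix (α₁ × β) (α₁ × β) ℂ) :
    (embedMid (c • X) : Matrix ((α₁ × α₂) × β) ((α₁ × α₂) × β) ℂ) = c • embedMid X := by
  ext p q
  simp only [embedMid, Matrix.smul_apply]
  split_ifs <;> simp

lemma loewner_ptrMid {X Y : Matrix ((α₁ × α₂) × β) ((α₁ × α₂) × β) ℂ}
    (h : LoewnerLE X Y) : LoewnerLE (ptrMid X) (ptrMid Y) := by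
  unfold LoewnerLE at *
  rw [← ptrMid_sub]
  exact ptrMid_posSemidef h

lemma loewner_embedMid {X Y : Matrix (α₁ × β) (α₁ × β) ℂ} (h : LoewnerLE X Y) :
    LoewnerLE (embedMid X : Matrix ((α₁ × α₂) × β) ((α₁ × α₂) × β) ℂ) (embedMid Y) := by
  unfold LoewnerLE at *
  rw [← embedMid_sub]
  exact embedMid_posSemidef h

lemma loewner_smul {n : Type*} [Fintype n] [DecidableEq n] {c : ℝ} (hc : 0 ≤ c)
    {X Y : Matrix n n ℂ} (h : LoewnerLE X Y) : LoewnerLE (c • X) (c • Y) := by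
  unfold LoewnerLE at *
  rw [← smul_sub]
  exact psd_smul_real hc h

lemma loewner_trans {n : Type*} [Fintype n] [DecidableEq n] {X Y Z : Matrix n n ℂ}
    (h1 : LoewnerLE X Y) (h2 : LoewnerLE Y Z) : LoewnerLE X Z := by
  unfold LoewnerLE at *
  rw [← sub_add_sub_cancel Z Y X]
  exact h2.add h1

lemma trace_ptrFst {α β : Type*} [Fintype α] [DecidableEq α] [Fintype β] [DecidableEq β]
    (ρ : Matrix (α × β) (α × β) ℂ) : (ptrFst ρ).trace = ρ.trace := by
  simp only [Matrix.trace, Matrix.diag, ptrFst, Fintype.sum_prod_type]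
  exact Finset.sum_comm

lemma trace_ptrSnd {α β : Type*} [Fintype α] [DecidableEq α] [Fintype β] [DecidableEq β]
    (ρ : Matrix (α × β) (α × β) ℂ) : (ptrSnd ρ).trace = ρ.trace := by
  simp only [Matrix.trace, Matrix.diag, ptrSnd, Fintype.sum_prod_type]

lemma trace_ptrMid (ρ : Matrix ((α₁ × α₂) × β) ((α₁ × α₂) × β) ℂ) :
    (ptrMid ρ).trace = ρ.trace := by
  simp only [Matrix.trace, Matrix.diag, ptrMid, Fintype.sum_prod_type]
  exact Finset.sum_congr rfl fun a _ => Finset.sum_comm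

lemma ptrFst_ptrMid (ρ : Matrix ((α₁ × α₂) × β) ((α₁ × α₂) × β) ℂ) :
    ptrFst (ptrMid ρ) = ptrFst ρ := by
  ext e f
  simp [ptrFst, ptrMid, Fintype.sum_prod_type]

/-- Inclusion for the second factor of a pair. -/
def inclK (α : Type*) {β : Type*} [DecidableEq α] [DecidableEq β] (k : β) :
    Matrix (α × β) α ℂ :=
  fun p q => if p.2 = k ∧ q = p.1 then 1 else 0

lemma ptrSnd_eq_sum {α β : Type*} [Fintype α] [DecidableEq α] [Fintype β] [DecidableEq β]
    (ρ : Matrix (α × β) (α × β) ℂ) :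
    ptrSnd ρ = ∑ k : β, (inclK α k)ᴴ * ρ * inclK α k := by
  have hcond : ∀ (k : β) (a : α) (p : α × β), (p.2 = k ∧ a = p.1) ↔ p = (a, k) := by
    rintro k a ⟨x, y⟩
    simp only [Prod.ext_iff]
    aesop
  have h2 : ∀ (k : β) (M : Matrix α (α × β) ℂ) (x : α) (a : α),
      (M * inclK α k) x a = M x (a, k) := by
    intro k M x a
    rw [Matrix.mul_apply]
    simp [inclK, hcond, Finset.sum_ite_eq']
  have h1 : ∀ (k : β) (M : Matrix (α × β) (α × β) ℂ) (a : α) (x : α × β),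
      ((inclK α k)ᴴ * M) a x = M (a, k) x := by
    intro k M a x
    rw [Matrix.mul_apply]
    simp [inclK, Matrix.conjTranspose_apply, apply_ite (star : ℂ → ℂ), hcond,
      Finset.sum_ite_eq']
  ext a b
  have h3 : ∀ k : β, ((inclK α k)ᴴ * ρ * inclK α k) a b = ρ (a, k) (b, k) := by
    intro k
    rw [h2 k ((inclK α k)ᴴ * ρ) a b, h1 k ρ a (b, k)]
  simp [ptrSnd, Matrix.sum_apply, h3]

lemma ptrSnd_posSemidef {α β : Type*} [Fintype α] [DecidableEq α] [Fintype β] [DecidableEq β]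
    {ρ : Matrix (α × β) (α × β) ℂ} (hρ : ρ.PosSemidef) : (ptrSnd ρ).PosSemidef := by
  rw [ptrSnd_eq_sum]
  exact psd_sum _ _ fun k _ => hρ.conjTranspose_mul_mul_same _

lemma ptrMid_kronecker (σ : Matrix (α₁ × α₂) (α₁ × α₂) ℂ) (E : Matrix β β ℂ) :
    ptrMid (σ ⊗ₖ E) = ptrSnd σ ⊗ₖ E := by
  ext p q
  simp [ptrMid, ptrSnd, Matrix.kroneckerMap_apply, Finset.sum_mul]

end Aux3
section Aux4
set_option linter.unusedSectionVars false
set_option maxHeartbeats 1000000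

variable {α₁ α₂ β : Type*} [Fintype α₁] [DecidableEq α₁] [Fintype α₂] [DecidableEq α₂]
  [Fintype β] [DecidableEq β]

lemma main_psd {ρ : Matrix ((α₁ × α₂) × β) ((α₁ × α₂) × β) ℂ} (hρ : ρ.PosSemidef) :
    LoewnerLE ρ ((Fintype.card α₂ : ℝ) •
      (embedMid (ptrMid ρ) : Matrix ((α₁ × α₂) × β) ((α₁ × α₂) × β) ℂ)) := by
  classical
  set d : ℕ := Fintype.card α₂ with hd
  set G : α₂ → Matrix ((α₁ × α₂) × β) (α₁ × β) ℂ := inclG α₁ β with hG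
  set A : α₂ → α₂ → Matrix ((α₁ × α₂) × β) ((α₁ × α₂) × β) ℂ :=
    fun j k => G j * (G k)ᴴ with hA
  set F : α₂ → α₂ → Matrix ((α₁ × α₂) × β) ((α₁ × α₂) × β) ℂ :=
    fun j k => A j k * ρ * (A j k)ᴴ with hF
  set Q : Matrix ((α₁ × α₂) × β) ((α₁ × α₂) × β) ℂ := ∑ j : α₂, F j j with hQ
  set R : Matrix ((α₁ × α₂) × β) ((α₁ × α₂) × β) ℂ :=
    ∑ j : α₂, ∑ k ∈ Finset.univ.erase j, F j k with hR
  have hone : ∑ j : α₂, A j j = 1 := sum_inclG_mul_conjTranspose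
  -- Step 1 : embedMid (ptrMid ρ) = ∑ j, ∑ k, F j k
  have step1 : (embedMid (ptrMid ρ) : Matrix ((α₁ × α₂) × β) ((α₁ × α₂) × β) ℂ)
      = ∑ j : α₂, ∑ k : α₂, F j k := by
    rw [embedMid_eq_sum, ptrMid_eq_sum]
    refine Finset.sum_congr rfl fun j _ => ?_
    rw [Matrix.mul_sum, Matrix.sum_mul]
    refine Finset.sum_congr rfl fun k _ => ?_
    simp only [hF, hA, hG, Matrix.conjTranspose_mul, Matrix.conjTranspose_conjTranspose,
      Matrix.mul_assoc]
  -- Step 2 : ∑ j, ∑ k, F j k = Q + R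
  have step2 : ∑ j : α₂, ∑ k : α₂, F j k = Q + R := by
    rw [hQ, hR, ← Finset.sum_add_distrib]
    exact Finset.sum_congr rfl fun j _ =>
      (Finset.add_sum_erase Finset.univ (F j) (Finset.mem_univ j)).symm
  -- component sums
  have e1 : ∑ j : α₂, ∑ k : α₂, A j j * ρ * (A j j)ᴴ = (d : ℝ) • Q := by
    rw [Nat.cast_smul_eq_nsmul, hQ, Finset.smul_sum]
    refine Finset.sum_congr rfl fun j _ => ?_
    rw [Finset.sum_const, Finset.card_univ]
  have e2 : ∑ j : α₂, ∑ k : α₂, A k k * ρ * (A k k)ᴴ = (d : ℝ) • Q := by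
    rw [Finset.sum_const, Finset.card_univ, Nat.cast_smul_eq_nsmul]
  have e3 : ∑ j : α₂, ∑ k : α₂, A j j * ρ * (A k k)ᴴ = ρ := by
    have : ∀ j : α₂, ∑ k : α₂, A j j * ρ * (A k k)ᴴ = A j j * ρ := by
      intro j
      rw [← Matrix.mul_sum, ← Matrix.conjTranspose_sum, hone, Matrix.conjTranspose_one,
        Matrix.mul_one]
    rw [Finset.sum_congr rfl fun j _ => this j, ← Matrix.sum_mul, hone, Matrix.one_mul]
  have e4 : ∑ j : α₂, ∑ k : α₂, A k k * ρ * (A j j)ᴴ = ρ := by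
    have : ∀ j : α₂, ∑ k : α₂, A k k * ρ * (A j j)ᴴ = ρ * (A j j)ᴴ := by
      intro j
      rw [← Matrix.sum_mul, ← Matrix.sum_mul, hone, Matrix.one_mul]
    rw [Finset.sum_congr rfl fun j _ => this j, ← Matrix.mul_sum,
      ← Matrix.conjTranspose_sum, hone, Matrix.conjTranspose_one, Matrix.mul_one]
  -- the key identity
  have key : ∑ j : α₂, ∑ k : α₂, (A j j - A k k) * ρ * (A j j - A k k)ᴴ
      = (d : ℝ) • Q + (d : ℝ) • Q - ρ - ρ := by
    have expand : ∀ j k : α₂, (A j j - A k k) * ρ * (A j j - A k k)ᴴ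
        = A j j * ρ * (A j j)ᴴ + A k k * ρ * (A k k)ᴴ
          - A j j * ρ * (A k k)ᴴ - A k k * ρ * (A j j)ᴴ := by
      intro j k
      simp only [Matrix.conjTranspose_sub, Matrix.mul_sub, Matrix.sub_mul]
      abel
    calc ∑ j : α₂, ∑ k : α₂, (A j j - A k k) * ρ * (A j j - A k k)ᴴ
        = ∑ j : α₂, ∑ k : α₂, (A j j * ρ * (A j j)ᴴ + A k k * ρ * (A k k)ᴴ
            - A j j * ρ * (A k k)ᴴ - A k k * ρ * (A j j)ᴴ) := by
          exact Finset.sum_congr rfl fun j _ => Finset.sum_congr rfl fun k _ => expand j k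
      _ = (d : ℝ) • Q + (d : ℝ) • Q - ρ - ρ := by
          simp only [Finset.sum_sub_distrib, Finset.sum_add_distrib]
          rw [e1, e2, e3, e4]
  -- assemble
  have hsplit : (d : ℝ) • (embedMid (ptrMid ρ) :
        Matrix ((α₁ × α₂) × β) ((α₁ × α₂) × β) ℂ) - ρ
      = (2⁻¹ : ℝ) • (∑ j : α₂, ∑ k : α₂, (A j j - A k k) * ρ * (A j j - A k k)ᴴ)
        + (d : ℝ) • R := by
    rw [step1, step2, key]
    module
  unfold LoewnerLE
  rw [hsplit]
  have h1 : (∑ j : α₂, ∑ k : α₂, (A j j - A k k) * ρ * (A j j - A k k)ᴴ).PosSemidef :=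
    psd_sum _ _ fun j _ => psd_sum _ _ fun k _ => hρ.mul_mul_conjTranspose_same _
  have h2 : R.PosSemidef :=
    psd_sum _ _ fun j _ => psd_sum _ _ fun k _ => hρ.mul_mul_conjTranspose_same _
  exact (psd_smul_real (by norm_num) h1).add
    (psd_smul_real (Nat.cast_nonneg d) h2)

end Aux4
section Aux5
set_option linter.unusedSectionVars false
set_option maxHeartbeats 1000000

lemma mem_nonneg {α β : Type*} [Fintype α] [DecidableEq α] [Fintype β] [DecidableEq β]
    {ρ : Matrix (α × β) (α × β) ℂ} (hρ : IsState ρ) {l : ℝ} {σ : Matrix α α ℂ}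
    (hσ : IsState σ) (h : LoewnerLE ρ (((2:ℝ) ^ l) • (σ ⊗ₖ ptrFst ρ))) : 0 ≤ l := by
  have ht := psd_trace_nonneg h
  rw [Matrix.trace_sub, Matrix.trace_smul, Matrix.trace_kronecker, hσ.2, trace_ptrFst,
    hρ.2, one_mul] at ht
  rw [Complex.real_smul, mul_one] at ht
  rw [Complex.le_def] at ht
  simp at ht
  have h1 : (1:ℝ) ≤ (2:ℝ) ^ l := by linarith
  by_contra hl
  push_neg at hl
  have h2 : (2:ℝ) ^ l < (2:ℝ) ^ (0:ℝ) :=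
    (Real.rpow_lt_rpow_left_iff (by norm_num)).mpr hl
  rw [Real.rpow_zero] at h2
  linarith

variable {α₁ α₂ β : Type*} [Fintype α₁] [DecidableEq α₁] [Fintype α₂] [DecidableEq α₂]
  [Fintype β] [DecidableEq β]

lemma S_to_S' {ρ : Matrix ((α₁ × α₂) × β) ((α₁ × α₂) × β) ℂ} {l : ℝ}
    (hl : ∃ σ : Matrix (α₁ × α₂) (α₁ × α₂) ℂ, IsState σ ∧
      LoewnerLE ρ (((2:ℝ) ^ l) • (σ ⊗ₖ ptrFst ρ))) :
    ∃ σ : Matrix α₁ α₁ ℂ, IsState σ ∧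
      LoewnerLE (ptrMid ρ) (((2:ℝ) ^ l) • (σ ⊗ₖ ptrFst (ptrMid ρ))) := by
  obtain ⟨σ, hσ, h⟩ := hl
  refine ⟨ptrSnd σ, ⟨ptrSnd_posSemidef hσ.1, (trace_ptrSnd σ).trans hσ.2⟩, ?_⟩
  have h2 := loewner_ptrMid h
  rwa [ptrMid_smul, ptrMid_kronecker, ← ptrFst_ptrMid] at h2

lemma S'_to_S {ρ : Matrix ((α₁ × α₂) × β) ((α₁ × α₂) × β) ℂ} (hρ : IsState ρ) {l : ℝ}
    (hl : ∃ σ : Matrix α₁ α₁ ℂ, IsState σ ∧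
      LoewnerLE (ptrMid ρ) (((2:ℝ) ^ l) • (σ ⊗ₖ ptrFst (ptrMid ρ))))
    (hne : Nonempty α₂) :
    ∃ σ : Matrix (α₁ × α₂) (α₁ × α₂) ℂ, IsState σ ∧
      LoewnerLE ρ (((2:ℝ) ^ (l + 2 * Real.logb 2 (Fintype.card α₂))) •
        (σ ⊗ₖ ptrFst ρ)) := by
  obtain ⟨σ, hσ, h⟩ := hl
  rw [ptrFst_ptrMid] at h
  set d : ℕ := Fintype.card α₂ with hd
  have hd0 : 0 < d := Fintype.card_pos
  have hdR : (0:ℝ) < (d:ℝ) := by exact_mod_cast hd0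
  have hdC : ((d:ℕ):ℂ) ≠ 0 := by exact_mod_cast hd0.ne'
  refine ⟨σ ⊗ₖ ((d:ℝ)⁻¹ • (1 : Matrix α₂ α₂ ℂ)), ⟨?_, ?_⟩, ?_⟩
  · exact kronecker_psd hσ.1 (psd_smul_real (inv_nonneg.mpr hdR.le) Matrix.PosSemidef.one)
  · rw [Matrix.trace_kronecker, hσ.2, one_mul, Matrix.trace_smul, Matrix.trace_one,
      Complex.real_smul]
    push_cast
    field_simp
    rfl
  · have h1 := main_psd hρ.1
    have h2 := loewner_smul (Nat.cast_nonneg d) (loewner_embedMid (α₂ := α₂) h)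
    have h3 := loewner_trans h1 h2
    have hsc : (2:ℝ) ^ (l + 2 * Real.logb 2 (d:ℝ)) = (2:ℝ) ^ l * (d:ℝ) ^ 2 := by
      rw [Real.rpow_add (by norm_num : (0:ℝ) < 2), mul_comm (2:ℝ) (Real.logb 2 (d:ℝ)),
        Real.rpow_mul (by norm_num : (0:ℝ) ≤ 2)]
      rw [Real.rpow_logb (by norm_num) (by norm_num) hdR]
      norm_num
    have heq : (d:ℝ) • (embedMid ((2:ℝ) ^ l • (σ ⊗ₖ ptrFst ρ)) :
          Matrix ((α₁ × α₂) × β) ((α₁ × α₂) × β) ℂ)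
        = ((2:ℝ) ^ (l + 2 * Real.logb 2 (d:ℝ))) •
          ((σ ⊗ₖ ((d:ℝ)⁻¹ • (1 : Matrix α₂ α₂ ℂ))) ⊗ₖ ptrFst ρ) := by
      rw [hsc]
      ext ⟨⟨a, j⟩, e⟩ ⟨⟨b, k⟩, f⟩
      simp only [embedMid, Matrix.smul_apply, Matrix.kroneckerMap_apply,
        Matrix.one_apply, Complex.real_smul, smul_eq_mul]
      by_cases hjk : j = k
      · simp only [hjk, if_pos rfl]
        push_cast
        field_simp
      · simp only [if_neg hjk]
        push_cast
        ring
    rw [← heq]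
    exact h3

end Aux5
/-- Non-locking property of the max-mutual information:
`I_max(E;A₁A₂)_ρ ≤ I_max(E;A₁)_ρ + 2·log|A₂|`. Here the state lives on `(A₁ × A₂) × E`. -/
theorem ImaxEA_le_ImaxEA_ptrMid_add_two_log_card {α₁ α₂ β : Type*}
    [Fintype α₁] [DecidableEq α₁] [Fintype α₂] [DecidableEq α₂]
    [Fintype β] [DecidableEq β]
    (ρ : Matrix ((α₁ × α₂) × β) ((α₁ × α₂) × β) ℂ) (hρ : IsState ρ) :
    ImaxEA ρ ≤ ImaxEA (ptrMid ρ) + 2 * Real.logb 2 (Fintype.card α₂) := by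
  classical
  have hne : Nonempty α₂ := by
    by_contra hcon
    have hE' : IsEmpty α₂ := not_nonempty_iff.mp hcon
    have h0 : ρ.trace = 0 := by
      rw [Matrix.trace]
      rw [Finset.univ_eq_empty, Finset.sum_empty]
    rw [hρ.2] at h0
    exact one_ne_zero h0
  have hd0 : 0 < Fintype.card α₂ := Fintype.card_pos
  have hc : 0 ≤ 2 * Real.logb 2 (Fintype.card α₂) := by
    have h1 : (1:ℝ) ≤ (Fintype.card α₂ : ℝ) := by exact_mod_cast hd0
    have h2 := Real.logb_nonneg (by norm_num : (1:ℝ) < 2) h1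
    linarith
  unfold ImaxEA
  rcases Set.eq_empty_or_nonempty {l : ℝ | ∃ σ : Matrix α₁ α₁ ℂ, IsState σ ∧
      LoewnerLE (ptrMid ρ) (((2:ℝ) ^ l) • (σ ⊗ₖ ptrFst (ptrMid ρ)))} with hE | hNE
  · have hSempty : {l : ℝ | ∃ σ : Matrix (α₁ × α₂) (α₁ × α₂) ℂ, IsState σ ∧
        LoewnerLE ρ (((2:ℝ) ^ l) • (σ ⊗ₖ ptrFst ρ))} = ∅ := by
      rw [Set.eq_empty_iff_forall_notMem]
      intro l hl
      have hmem : l ∈ {l : ℝ | ∃ σ : Matrix α₁ α₁ ℂ, IsState σ ∧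
          LoewnerLE (ptrMid ρ) (((2:ℝ) ^ l) • (σ ⊗ₖ ptrFst (ptrMid ρ)))} := S_to_S' hl
      rw [hE] at hmem
      exact hmem
    rw [hSempty, hE, Real.sInf_empty]
    linarith
  · have hbdd : BddBelow {l : ℝ | ∃ σ : Matrix (α₁ × α₂) (α₁ × α₂) ℂ, IsState σ ∧
        LoewnerLE ρ (((2:ℝ) ^ l) • (σ ⊗ₖ ptrFst ρ))} := by
      refine ⟨0, fun l hl => ?_⟩
      obtain ⟨σ, hσ, h⟩ := hl
      exact mem_nonneg hρ hσ h
    have hstep : ∀ l ∈ {l : ℝ | ∃ σ : Matrix α₁ α₁ ℂ, IsState σ ∧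
        LoewnerLE (ptrMid ρ) (((2:ℝ) ^ l) • (σ ⊗ₖ ptrFst (ptrMid ρ)))},
        sInf {l : ℝ | ∃ σ : Matrix (α₁ × α₂) (α₁ × α₂) ℂ, IsState σ ∧
          LoewnerLE ρ (((2:ℝ) ^ l) • (σ ⊗ₖ ptrFst ρ))}
          ≤ l + 2 * Real.logb 2 (Fintype.card α₂) := by
      intro l hl
      exact csInf_le hbdd (S'_to_S hρ hl hne)
    have h2 : sInf {l : ℝ | ∃ σ : Matrix (α₁ × α₂) (α₁ × α₂) ℂ, IsState σ ∧
          LoewnerLE ρ (((2:ℝ) ^ l) • (σ ⊗ₖ ptrFst ρ))}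
          - 2 * Real.logb 2 (Fintype.card α₂)
        ≤ sInf {l : ℝ | ∃ σ : Matrix α₁ α₁ ℂ, IsState σ ∧
          LoewnerLE (ptrMid ρ) (((2:ℝ) ^ l) • (σ ⊗ₖ ptrFst (ptrMid ρ)))} := by
      refine le_csInf hNE fun l hl => ?_
      have := hstep l hl
      linarith
    linarith
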